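/- Let Γ be the Petersen graph realized as the Kneser graph KG_{5,2}. The natural group homomorphism from S_5 to the automorphism group of Γ, sending g ∈ S_5 to the graph automorphism {a,b} ↦ {g(a),g(b)}, is an isomorphism; in particular, Aut(Γ) ≅ S_5. -/

import Mathlib

set_option maxRecDepth 40000
set_option synthInstance.maxSize 2000
set_option synthInstance.maxHeartbeats 1000000
set_option maxHeartbeats 2000000

noncomputable section

/-- Vertices of the Kneser graph `KG_{5,2}`: the 2-element subsets of `{1,…,5}`. -/
abbrev KVertex : Type := {s : Finset (Fin 5) // s.card = 2}

/-- The Petersen graph, realized as the Kneser graph `KG_{5,2}`: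
two 2-element subsets are adjacent iff they are disjoint. -/
def petersen : SimpleGraph KVertex where
  Adj u v := Disjoint u.1 v.1
  symm := ⟨fun _ _ h => h.symm⟩
  loopless := ⟨by
    intro v h
    have hv := v.2
    rw [disjoint_self.mp h] at hv
    simp at hv⟩

/-- The action of `S_5` on the vertices: `g • {a,b} = {g a, g b}`. -/
instance : SMul (Equiv.Perm (Fin 5)) KVertex :=
  ⟨fun g v => ⟨v.1.image g, by rw [Finset.card_image_of_injective _ g.injective]; exact v.2⟩⟩

instance : MulAction (Equiv.Perm (Fin 5)) KVertex where
  one_smul v := by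
    apply Subtype.ext
    show v.1.image ⇑(1 : Equiv.Perm (Fin 5)) = v.1
    simp
  mul_smul g h v := by
    apply Subtype.ext
    show v.1.image ⇑(g * h) = (v.1.image ⇑h).image ⇑g
    rw [Finset.image_image]
    rfl

/-- The natural map sending `g ∈ S_5` to the graph automorphism
`{a,b} ↦ {g(a), g(b)}` of the Petersen graph. -/
def toAut (g : Equiv.Perm (Fin 5)) : petersen ≃g petersen where
  toEquiv := MulAction.toPerm g
  map_rel_iff' := by
    intro u v
    show Disjoint (u.1.image ⇑g) (v.1.image ⇑g) ↔ Disjoint u.1 v.1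
    exact Finset.disjoint_image g.injective

/- ### Auxiliary lemmas -/

lemma helly : ∀ v1 v2 v3 v4 : KVertex, v1 ≠ v2 → v1 ≠ v3 → v1 ≠ v4 → v2 ≠ v3 → v2 ≠ v4 → v3 ≠ v4 →
    (v1.1 ∩ v2.1).Nonempty → (v1.1 ∩ v3.1).Nonempty → (v1.1 ∩ v4.1).Nonempty →
    (v2.1 ∩ v3.1).Nonempty → (v2.1 ∩ v4.1).Nonempty → (v3.1 ∩ v4.1).Nonempty →
    ∃ a : Fin 5, a ∈ v1.1 ∧ a ∈ v2.1 ∧ a ∈ v3.1 ∧ a ∈ v4.1 := by decide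

lemma star_card : ∀ c : Fin 5, (Finset.univ.filter fun v : KVertex => c ∈ v.1).card = 4 := by
  decide

lemma pair_card : ∀ a b : Fin 5, a ≠ b →
    (Finset.univ.filter fun v : KVertex => a ∈ v.1 ∨ b ∈ v.1).card = 7 := by decide

lemma exists_two : ∀ a : Fin 5, ∃ b c : Fin 5, b ≠ a ∧ c ≠ a ∧ b ≠ c := by decide

lemma star_eq : ∀ a : Fin 5, ∃ u1 u2 u3 u4 : KVertex,
    u1 ≠ u2 ∧ u1 ≠ u3 ∧ u1 ≠ u4 ∧ u2 ≠ u3 ∧ u2 ≠ u4 ∧ u3 ≠ u4 ∧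
    a ∈ u1.1 ∧ a ∈ u2.1 ∧ a ∈ u3.1 ∧ a ∈ u4.1 ∧
    ∀ v : KVertex, a ∈ v.1 → v = u1 ∨ v = u2 ∨ v = u3 ∨ v = u4 := by decide

lemma smul_coe (g : Equiv.Perm (Fin 5)) (v : KVertex) : (g • v).1 = v.1.image g := rfl

lemma toAut_apply (g : Equiv.Perm (Fin 5)) (v : KVertex) : toAut g v = g • v := rfl

lemma key (φ : petersen ≃g petersen) (a : Fin 5) :
    ∃ c : Fin 5, ∀ v : KVertex, a ∈ v.1 → c ∈ (φ v).1 := by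
  obtain ⟨u1, u2, u3, u4, h12, h13, h14, h23, h24, h34, ha1, ha2, ha3, ha4, hall⟩ := star_eq a
  have hinj : Function.Injective φ := φ.toEquiv.injective
  have hadj : ∀ u v : KVertex, a ∈ u.1 → a ∈ v.1 → ((φ u).1 ∩ (φ v).1).Nonempty := by
    intro u v hu hv
    rw [← Finset.not_disjoint_iff_nonempty_inter]
    have h2 : ¬ petersen.Adj u v := by
      show ¬ Disjoint u.1 v.1
      exact Finset.not_disjoint_iff.mpr ⟨a, hu, hv⟩
    intro hd
    exact h2 (φ.map_rel_iff'.mp hd)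
  obtain ⟨c, hc1, hc2, hc3, hc4⟩ := helly (φ u1) (φ u2) (φ u3) (φ u4)
    (fun h => h12 (hinj h)) (fun h => h13 (hinj h)) (fun h => h14 (hinj h))
    (fun h => h23 (hinj h)) (fun h => h24 (hinj h)) (fun h => h34 (hinj h))
    (hadj _ _ ha1 ha2) (hadj _ _ ha1 ha3) (hadj _ _ ha1 ha4)
    (hadj _ _ ha2 ha3) (hadj _ _ ha2 ha4) (hadj _ _ ha3 ha4)
  refine ⟨c, fun v hv => ?_⟩
  rcases hall v hv with h | h | h | h <;> subst h <;> assumption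

/-- The natural group homomorphism `S_5 → Aut(Γ)` of the Petersen
graph, `g ↦ ({a,b} ↦ {g(a), g(b)})`, is multiplicative and bijective onto the group of
all graph automorphisms; in particular `Aut(Γ) ≅ S_5`. -/
theorem petersen_aut_eq_S5 :
    (∀ g h : Equiv.Perm (Fin 5), toAut (g * h) = (toAut g).comp (toAut h)) ∧
    Function.Bijective toAut := by
  refine ⟨?_, ?_, ?_⟩
  · -- multiplicativity
    intro g h
    apply DFunLike.ext
    intro v
    show (g * h) • v = g • (h • v)
    rw [mul_smul]
  · -- injectivity
    intro g h hgh
    have hv : ∀ v : KVertex, g • v = h • v := by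
      intro v
      have := DFunLike.congr_fun hgh v
      rwa [toAut_apply, toAut_apply] at this
    apply Equiv.ext
    intro a
    obtain ⟨b, c, hb, hc, hbc⟩ := exists_two a
    have hab : ({a, b} : Finset (Fin 5)).card = 2 := Finset.card_pair hb.symm
    have hac : ({a, c} : Finset (Fin 5)).card = 2 := Finset.card_pair hc.symm
    have h1 := congrArg Subtype.val (hv ⟨{a, b}, hab⟩)
    have h2 := congrArg Subtype.val (hv ⟨{a, c}, hac⟩)
    rw [smul_coe, smul_coe] at h1
    rw [smul_coe, smul_coe] at h2
    have m1 : g a ∈ ({a, b} : Finset (Fin 5)).image h := by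
      rw [← h1]; exact Finset.mem_image_of_mem _ (by simp)
    have m2 : g a ∈ ({a, c} : Finset (Fin 5)).image h := by
      rw [← h2]; exact Finset.mem_image_of_mem _ (by simp)
    simp only [Finset.image_insert, Finset.image_singleton, Finset.mem_insert,
      Finset.mem_singleton] at m1 m2
    rcases m1 with m1 | m1
    · exact m1
    · rcases m2 with m2 | m2
      · exact m2
      · exact absurd (h.injective (m1.symm.trans m2)) hbc
  · -- surjectivity
    intro φ
    choose g0 hg0 using key φ
    have hinjφ : Function.Injective φ := φ.toEquiv.injective
    have hg0inj : Function.Injective g0 := by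
      intro a b hab
      by_contra hne
      have hmaps : ∀ v ∈ (Finset.univ.filter fun v : KVertex => a ∈ v.1 ∨ b ∈ v.1),
          φ v ∈ (Finset.univ.filter fun v : KVertex => g0 a ∈ v.1) := by
        intro v hvmem
        simp only [Finset.mem_filter, Finset.mem_univ, true_and] at hvmem ⊢
        rcases hvmem with h | h
        · exact hg0 a v h
        · rw [hab]; exact hg0 b v h
      have hcard := Finset.card_le_card_of_injOn φ hmaps (fun x _ y _ hxy => hinjφ hxy)
      rw [pair_card a b hne, star_card (g0 a)] at hcard
      omega
    have hg0bij : Function.Bijective g0 := Finite.injective_iff_bijective.mp hg0inj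
    refine ⟨Equiv.ofBijective g0 hg0bij, ?_⟩
    apply DFunLike.ext
    intro v
    rw [toAut_apply]
    apply Subtype.ext
    rw [smul_coe]
    have hsub : v.1.image (Equiv.ofBijective g0 hg0bij) ⊆ (φ v).1 := by
      intro x hx
      rw [Finset.mem_image] at hx
      obtain ⟨a, ha, rfl⟩ := hx
      exact hg0 a v ha
    apply Finset.eq_of_subset_of_card_le hsub
    rw [Finset.card_image_of_injective _ (Equiv.ofBijective g0 hg0bij).injective, v.2, (φ v).2]

end
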